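/- The group with presentation on four generators a₁, b₁, a₂, b₂ with the nine relators a₁b₂, b₁b₂b₁⁻¹a₁⁻¹, [a₁,b₁], b₁b₂a₂a₂, b₁b₂a₂b₂⁻¹a₁⁻¹a₂a₁, a₁⁻¹a₂⁻¹a₁b₂a₂b₂⁻¹, b₂b₁a₁b₁, b₂b₁a₁a₂⁻¹a₁b₁a₂, and b₂b₁a₁a₂⁻¹b₁⁻¹a₁⁻¹a₂b₂⁻¹ is isomorphic to the cyclic group ℤ/4ℤ. -/

import Mathlib

/-!
The group with presentation on generators a₁, b₁, a₂, b₂ and the nine relators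
a₁b₂, b₁b₂b₁⁻¹a₁⁻¹, [a₁,b₁], b₁b₂a₂a₂, b₁b₂a₂b₂⁻¹a₁⁻¹a₂a₁, a₁⁻¹a₂⁻¹a₁b₂a₂b₂⁻¹,
b₂b₁a₁b₁, b₂b₁a₁a₂⁻¹a₁b₁a₂, b₂b₁a₁a₂⁻¹b₁⁻¹a₁⁻¹a₂b₂⁻¹
is isomorphic to ℤ/4ℤ.  Generators: a₁ = 0, b₁ = 1, a₂ = 2, b₂ = 3.
-/

namespace Stmt3

def a₁ : FreeGroup (Fin 4) := FreeGroup.of 0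
def b₁ : FreeGroup (Fin 4) := FreeGroup.of 1
def a₂ : FreeGroup (Fin 4) := FreeGroup.of 2
def b₂ : FreeGroup (Fin 4) := FreeGroup.of 3

def rels : Set (FreeGroup (Fin 4)) :=
  { a₁ * b₂,
    b₁ * b₂ * b₁⁻¹ * a₁⁻¹,
    a₁ * b₁ * a₁⁻¹ * b₁⁻¹,
    b₁ * b₂ * a₂ * a₂,
    b₁ * b₂ * a₂ * b₂⁻¹ * a₁⁻¹ * a₂ * a₁,
    a₁⁻¹ * a₂⁻¹ * a₁ * b₂ * a₂ * b₂⁻¹,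
    b₂ * b₁ * a₁ * b₁,
    b₂ * b₁ * a₁ * a₂⁻¹ * a₁ * b₁ * a₂,
    b₂ * b₁ * a₁ * a₂⁻¹ * b₁⁻¹ * a₁⁻¹ * a₂ * b₂⁻¹ }

def fmap : Fin 4 → Multiplicative (ZMod 4) :=
  ![Multiplicative.ofAdd 0, Multiplicative.ofAdd 2, Multiplicative.ofAdd 1, Multiplicative.ofAdd 0]

lemma hf : ∀ r ∈ rels, FreeGroup.lift fmap r = 1 := by
  intro r hr
  simp only [rels, Set.mem_insert_iff, Set.mem_singleton_iff] at hr
  rcases hr with h|h|h|h|h|h|h|h|h <;> subst h <;>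
    simp [a₁, b₁, a₂, b₂, fmap, ← ofAdd_add] <;> decide

lemma relmk : ∀ r ∈ rels, PresentedGroup.mk rels r = 1 := fun r hr =>
  (QuotientGroup.eq_one_iff r).mpr (Subgroup.subset_normalClosure hr)

abbrev G := PresentedGroup rels
abbrev A : G := PresentedGroup.of 0
abbrev B : G := PresentedGroup.of 1
abbrev C : G := PresentedGroup.of 2
abbrev D : G := PresentedGroup.of 3

lemma h1 : A * D = 1 := by
  simpa [a₁, b₂, map_mul, A, D, PresentedGroup.of] using relmk (a₁ * b₂) (by simp [rels])
lemma h2 : B * D * B⁻¹ * A⁻¹ = 1 := by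
  simpa [a₁, b₁, b₂, map_mul, A, B, D, PresentedGroup.of] using relmk (b₁ * b₂ * b₁⁻¹ * a₁⁻¹) (by simp [rels])
lemma h3 : A * B * A⁻¹ * B⁻¹ = 1 := by
  simpa [a₁, b₁, map_mul, A, B, PresentedGroup.of] using relmk (a₁ * b₁ * a₁⁻¹ * b₁⁻¹) (by simp [rels])
lemma h4 : B * D * C * C = 1 := by
  simpa [b₁, b₂, a₂, map_mul, B, C, D, PresentedGroup.of] using relmk (b₁ * b₂ * a₂ * a₂) (by simp [rels])
lemma h5 : B * D * C * D⁻¹ * A⁻¹ * C * A = 1 := by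
  simpa [a₁, b₁, a₂, b₂, map_mul, A, B, C, D, PresentedGroup.of] using
    relmk (b₁ * b₂ * a₂ * b₂⁻¹ * a₁⁻¹ * a₂ * a₁) (by simp [rels])
lemma h7 : D * B * A * B = 1 := by
  simpa [a₁, b₁, b₂, map_mul, A, B, D, PresentedGroup.of] using relmk (b₂ * b₁ * a₁ * b₁) (by simp [rels])
lemma h8 : D * B * A * C⁻¹ * A * B * C = 1 := by
  simpa [a₁, b₁, a₂, b₂, map_mul, A, B, C, D, PresentedGroup.of] using
    relmk (b₂ * b₁ * a₁ * a₂⁻¹ * a₁ * b₁ * a₂) (by simp [rels])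

lemma hD : D = A⁻¹ := eq_inv_of_mul_eq_one_right h1

lemma comm : A * B = B * A := by
  have := mul_inv_eq_one.mp h3
  exact mul_inv_eq_iff_eq_mul.mp this

lemma hAi : A⁻¹ = A := by
  have h2' : B * A⁻¹ * B⁻¹ = A := by
    have := mul_inv_eq_one.mp h2
    rwa [hD] at this
  have hc : Commute A B := comm
  calc A⁻¹ = A⁻¹ * B * B⁻¹ := by group
    _ = B * A⁻¹ * B⁻¹ := by rw [hc.inv_left.eq]
    _ = A := h2'

lemma hDA : D = A := hD.trans hAi

lemma hA2 : A * A = 1 := by nth_rewrite 2 [← hAi]; simp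

lemma sA : ∀ x : G, A * (A * x) = x := by
  intro x; rw [← mul_assoc, hA2, one_mul]

lemma hB2 : B * B = 1 := by
  have h7' : A⁻¹ * B * A * B = 1 := by have h := h7; rwa [hD] at h
  have key : A⁻¹ * B * A = B := by
    rw [mul_assoc, ← comm, ← mul_assoc, inv_mul_cancel, one_mul]
  rwa [key] at h7'

lemma hBi : B⁻¹ = B := (eq_inv_of_mul_eq_one_right hB2).symm

lemma sB : ∀ x : G, B * (B * x) = x := by
  intro x; rw [← mul_assoc, hB2, one_mul]

lemma hC2 : C * C = A * B := by
  have h4' : (B * A) * (C * C) = 1 := by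
    have := h4; rw [hDA] at this; rw [← mul_assoc]; exact this
  have := eq_inv_of_mul_eq_one_right h4'
  rw [this, mul_inv_rev, hAi, hBi, comm]

lemma sC : ∀ x : G, C * (C * x) = A * (B * x) := by
  intro x; rw [← mul_assoc, hC2, mul_assoc]

lemma hA1 : A = 1 := by
  have := h5
  rw [hDA] at this
  rw [hAi] at this
  -- this : B * A * C * A⁻¹?? check below
  simp only [mul_assoc] at this
  simp only [sA, sB, sC] at this
  -- hope: this : A = 1 or similar
  exact this

end Stmt3

namespace Stmt3

lemma hD1 : D = 1 := hDA.trans hA1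
lemma hBC : B = C * C := by rw [hC2, hA1, one_mul]

lemma hC4 : C ^ (4:ℤ) = 1 := by
  have h := h8
  rw [hD1, hA1, hBC] at h
  simp only [one_mul, mul_one] at h
  have e : C * (C * (C * C)) = 1 := by rw [← h]; group
  have e4 : C ^ (4:ℕ) = 1 := by
    rw [show C ^ (4:ℕ) = C * (C * (C * C)) by rw [pow_succ, pow_succ, pow_succ, pow_one]; group]
    exact e
  rw [show ((4:ℤ)) = ((4:ℕ):ℤ) by norm_num, zpow_natCast, e4]

noncomputable def φ : G →* Multiplicative (ZMod 4) := PresentedGroup.toGroup hf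

def ψ : Multiplicative (ZMod 4) →* G :=
  AddMonoidHom.toMultiplicativeLeft
    (ZMod.lift 4 ⟨zmultiplesHom (Additive G) (Additive.ofMul C), by
      have e4 : C ^ ((4:ℕ):ℤ) = 1 := by rw [show (((4:ℕ):ℤ)) = (4:ℤ) by norm_num]; exact hC4
      simp only [zmultiplesHom_apply, ← ofMul_zpow, e4, ofMul_one]⟩)

lemma hψint : ∀ n : ℤ, ψ (Multiplicative.ofAdd ((n : ZMod 4))) = C ^ n := by
  intro n
  simp only [ψ, AddMonoidHom.coe_toMultiplicativeLeft, Function.comp_apply, toAdd_ofAdd]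
  rw [ZMod.lift_coe]
  simp [zmultiplesHom_apply, toMul_zsmul]

lemma e0 : ψ (Multiplicative.ofAdd (0 : ZMod 4)) = 1 := by
  have h := hψint 0
  simp only [Int.cast_zero, zpow_zero] at h
  exact h

lemma e1 : ψ (Multiplicative.ofAdd (1 : ZMod 4)) = C := by
  have h := hψint 1
  norm_num at h
  exact h

lemma e2 : ψ (Multiplicative.ofAdd (2 : ZMod 4)) = C * C := by
  have h := hψint 2
  norm_num at h
  rw [h, pow_two]

lemma left : ψ.comp φ = MonoidHom.id G := by
  ext x
  fin_cases x <;>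
    simp only [MonoidHom.comp_apply, MonoidHom.id_apply, φ, PresentedGroup.toGroup.of, fmap]
  · show ψ (Multiplicative.ofAdd (0 : ZMod 4)) = PresentedGroup.of 0
    rw [e0]; exact hA1.symm
  · show ψ (Multiplicative.ofAdd (2 : ZMod 4)) = PresentedGroup.of 1
    rw [e2]; exact hBC.symm
  · show ψ (Multiplicative.ofAdd (1 : ZMod 4)) = PresentedGroup.of 2
    rw [e1]
  · show ψ (Multiplicative.ofAdd (0 : ZMod 4)) = PresentedGroup.of 3
    rw [e0]; exact hD1.symm

lemma right : φ.comp ψ = MonoidHom.id (Multiplicative (ZMod 4)) := by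
  ext x
  obtain ⟨y, rfl⟩ : ∃ y : ZMod 4, Multiplicative.ofAdd y = x := ⟨Multiplicative.toAdd x, rfl⟩
  have hy : ((y.val : ℤ) : ZMod 4) = y := by
    push_cast
    simp [ZMod.natCast_val, ZMod.cast_id]
  calc (φ.comp ψ) (Multiplicative.ofAdd y)
      = φ (ψ (Multiplicative.ofAdd ((y.val : ℤ) : ZMod 4))) := by rw [hy]; rfl
    _ = φ (C ^ (y.val : ℤ)) := by rw [hψint]
    _ = (Multiplicative.ofAdd (1 : ZMod 4)) ^ ((y.val : ℤ)) := by
        have hφC : φ C = Multiplicative.ofAdd (1 : ZMod 4) := by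
          simp [φ, fmap]
        rw [map_zpow, hφC]
    _ = Multiplicative.ofAdd y := by
        rw [← ofAdd_zsmul, zsmul_eq_mul, mul_one, hy]
    _ = MonoidHom.id (Multiplicative (ZMod 4)) (Multiplicative.ofAdd y) := rfl

theorem pi1_X_eta :
    Nonempty (PresentedGroup rels ≃* Multiplicative (ZMod 4)) :=
  ⟨MonoidHom.toMulEquiv φ ψ left right⟩

end Stmt3
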